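/- Let p be a prime with p ≡ 1 (mod 3), and let (a, b) be the unique pair of integers with b > 0, a ≡ 1 (mod 3), and 4p = a² + 27b². Then the number of solutions (x₁,…,x₅) ∈ 𝔽_p⁵ of x₁³ + x₂³ + x₃³ + x₄³ + x₅³ = 0 equals 1 + (p − 1)·(1 + p + p² + p³ + 5ap); equivalently, the Fermat cubic threefold has exactly 1 + p + p² + p³ + 5ap points in ℙ⁴(𝔽_p). -/

import Mathlib

open Finset

/-! ### Auxiliary lemmas -/

/-- An additive character maps finite sums to products. -/
private lemma addChar_map_sum {A M : Type*} [AddCommMonoid A] [CommMonoid M]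
    (ψ : AddChar A M) {ι : Type*} (s : Finset ι) (f : ι → A) :
    ψ (∑ i ∈ s, f i) = ∏ i ∈ s, ψ (f i) := by
  classical
  induction s using Finset.induction with
  | empty => simp
  | insert _ _ h ih => rw [Finset.sum_insert h, Finset.prod_insert h, ψ.map_add_eq_mul, ih]

/-- Elements of `ℤ[ω]` with `ω² = -1-ω` have integer coordinates w.r.t. `1, ω`. -/
private lemma exists_coords {ω : ℂ} (hsq : ω ^ 2 = -1 - ω) {x : ℂ}
    (hx : x ∈ Algebra.adjoin ℤ {ω}) : ∃ u v : ℤ, x = (u : ℂ) + (v : ℂ) * ω := by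
  induction hx using Algebra.adjoin_induction with
  | mem x hx =>
      rw [Set.mem_singleton_iff] at hx
      exact ⟨0, 1, by simp [hx]⟩
  | algebraMap r => exact ⟨r, 0, by simp⟩
  | add x y hx hy ihx ihy =>
      obtain ⟨u, v, rfl⟩ := ihx
      obtain ⟨u', v', rfl⟩ := ihy
      exact ⟨u + u', v + v', by push_cast; ring⟩
  | mul x y hx hy ihx ihy =>
      obtain ⟨u, v, rfl⟩ := ihx
      obtain ⟨u', v', rfl⟩ := ihy
      refine ⟨u * u' - v * v', u * v' + v * u' - v * v', ?_⟩
      push_cast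
      linear_combination (v * v' : ℂ) * hsq

/-- Coordinates w.r.t. `1, ω` are unique when `ω` is not real. -/
private lemma coords_unique {ω : ℂ} (him : ω.im ≠ 0) {u v u' v' : ℤ}
    (h : (u : ℂ) + (v : ℂ) * ω = (u' : ℂ) + (v' : ℂ) * ω) : u = u' ∧ v = v' := by
  have him2 := congrArg Complex.im h
  simp only [Complex.add_im, Complex.intCast_im, Complex.mul_im, Complex.intCast_re,
    zero_mul, zero_add, add_zero, mul_zero] at him2
  have hv : (v : ℝ) = v' := by
    exact mul_right_cancel₀ him him2
  have hv' : v = v' := by exact_mod_cast hv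
  subst hv'
  have hre := congrArg Complex.re h
  simp only [Complex.add_re, Complex.intCast_re, Complex.mul_re, Complex.intCast_im] at hre
  constructor
  · have : (u : ℝ) = u' := by linarith
    exact_mod_cast this
  · rfl

/-- Uniqueness of the representation `4p = a² + 27b²` with `b > 0`, `a ≡ 1 mod 3`. -/
private lemma rep_unique {p : ℕ} (hp : p.Prime) {a b A B : ℤ}
    (hb : 0 < b) (hB : 0 < B) (ha : a % 3 = 1) (hA : A % 3 = 1)
    (h1 : (4 * p : ℤ) = a ^ 2 + 27 * b ^ 2) (h2 : (4 * p : ℤ) = A ^ 2 + 27 * B ^ 2) :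
    a = A := by
  have hpZ : Prime (p : ℤ) := Nat.prime_iff_prime_int.mp hp
  have hp0 : (0 : ℤ) < p := by exact_mod_cast hp.pos
  have key : (a * B - b * A) * (a * B + b * A) = (p : ℤ) * (4 * (B ^ 2 - b ^ 2)) := by
    linear_combination b ^ 2 * h2 - B ^ 2 * h1
  have hdvd : (p : ℤ) ∣ (a * B - b * A) * (a * B + b * A) := ⟨_, key⟩
  rcases hpZ.dvd_mul.mp hdvd with hd | hd
  · -- p ∣ aB - bA; show aB = bA
    obtain ⟨k, hk⟩ := hd
    have iden : (16 : ℤ) * p ^ 2 = (a * A + 27 * b * B) ^ 2 + 27 * (a * B - b * A) ^ 2 := by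
      linear_combination (4 * (p : ℤ)) * h1 + (a ^ 2 + 27 * b ^ 2) * h2
    rw [hk] at iden
    have hk0 : k = 0 := by
      by_contra hk0
      have hk1 : (1 : ℤ) ≤ k ^ 2 := by nlinarith [sq_abs k, Int.one_le_abs hk0]
      nlinarith [sq_nonneg (a * A + 27 * b * B), mul_pos hp0 hp0,
        mul_le_mul_of_nonneg_left hk1 (le_of_lt (mul_pos hp0 hp0))]
    have heq : a * B = b * A := by rw [hk0, mul_zero] at hk; linarith
    rw [heq, sub_self, zero_mul] at key
    rcases mul_eq_zero.mp key.symm with h0 | h0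
    · exact absurd h0 (ne_of_gt hp0)
    have hb2 : b ^ 2 = B ^ 2 := by linarith
    have hfac : (b - B) * (b + B) = 0 := by linear_combination hb2
    rcases mul_eq_zero.mp hfac with h0' | h0'
    · have hbb : b = B := by linarith
      subst hbb
      exact mul_right_cancel₀ (ne_of_gt hb) (by linarith : a * b = A * b)
    · linarith
  · obtain ⟨k, hk⟩ := hd
    have iden : (16 : ℤ) * p ^ 2 = (a * A - 27 * b * B) ^ 2 + 27 * (a * B + b * A) ^ 2 := by
      linear_combination (4 * (p : ℤ)) * h1 + (a ^ 2 + 27 * b ^ 2) * h2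
    rw [hk] at iden
    have hk0 : k = 0 := by
      by_contra hk0
      have hk1 : (1 : ℤ) ≤ k ^ 2 := by nlinarith [sq_abs k, Int.one_le_abs hk0]
      nlinarith [sq_nonneg (a * A - 27 * b * B), mul_pos hp0 hp0,
        mul_le_mul_of_nonneg_left hk1 (le_of_lt (mul_pos hp0 hp0))]
    have heq : a * B = -(b * A) := by rw [hk0, mul_zero] at hk; linarith
    have key2 : (0 : ℤ) = (p : ℤ) * (4 * (B ^ 2 - b ^ 2)) := by
      rw [← key]; linear_combination (b * A - a * B) * heq
    rcases mul_eq_zero.mp key2.symm with h0 | h0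
    · exact absurd h0 (ne_of_gt hp0)
    have hb2 : b ^ 2 = B ^ 2 := by linarith
    have hfac : (b - B) * (b + B) = 0 := by linear_combination hb2
    rcases mul_eq_zero.mp hfac with h0' | h0'
    · have hbb : b = B := by linarith
      subst hbb
      have haA : a = -A := by
        have := mul_right_cancel₀ (ne_of_gt hb) (by linarith : a * b = (-A) * b)
        exact this
      omega
    · linarith


open Polynomial in
/-- The number of cube roots of `u` in `𝔽_p`, expressed via a cubic character. -/
private lemma cube_count {p : ℕ} [Fact p.Prime] (hmod : p % 3 = 1)
    (χ : MulChar (ZMod p) ℂ) (hχord : orderOf χ = 3) (u : ZMod p) :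
    ((Finset.univ.filter (fun t : ZMod p => t ^ 3 = u)).card : ℂ)
      = (if u = 0 then 1 else 0) + ((1 : MulChar (ZMod p) ℂ) u + χ u + (χ ^ 2) u) := by
  have hp : p.Prime := Fact.out
  have hχ3 : χ ^ 3 = 1 := by rw [← hχord]; exact pow_orderOf_eq_one χ
  have hχ1 : χ ≠ 1 := by
    intro h
    rw [h, orderOf_one] at hχord
    norm_num at hχord
  by_cases hu : u = 0
  · subst hu
    have : Finset.univ.filter (fun t : ZMod p => t ^ 3 = 0) = {0} := by
      ext t
      simp [pow_eq_zero_iff (three_ne_zero)]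
    rw [this, if_pos rfl]
    simp [MulChar.map_zero]
  -- generator of the units
  obtain ⟨g, hg⟩ := IsCyclic.exists_generator (α := (ZMod p)ˣ)
  have horderg : orderOf g = p - 1 := by
    rw [orderOf_eq_card_of_forall_mem_zpowers hg, Nat.card_eq_fintype_card, Fintype.card_units, ZMod.card]
  have hp3 : 3 ∣ p - 1 := by
    have := hp.two_le
    omega
  -- primitive cube root of unity in ZMod p
  have hordξ : orderOf (g ^ ((p - 1) / 3)) = 3 := by
    rw [orderOf_pow, horderg, Nat.gcd_eq_right (Nat.div_dvd_of_dvd hp3),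
      Nat.div_div_self hp3 (by have := hp.two_le; omega)]
  have hξ : IsPrimitiveRoot ((g ^ ((p - 1) / 3) : (ZMod p)ˣ) : ZMod p) 3 := by
    have h := IsPrimitiveRoot.orderOf (g ^ ((p - 1) / 3))
    rw [hordξ] at h
    exact IsPrimitiveRoot.coe_units_iff.mpr h
  -- order of χ g is 3
  have hχg3 : (χ ↑g) ^ 3 = 1 := by
    rw [← MulChar.pow_apply_coe, hχ3, MulChar.one_apply_coe]
  have hordχg : orderOf (χ ↑g) = 3 := by
    have hdvd : orderOf (χ ↑g) ∣ 3 := orderOf_dvd_of_pow_eq_one hχg3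
    rcases (Nat.Prime.eq_one_or_self_of_dvd (by norm_num) _ hdvd) with h | h
    · exfalso
      apply hχ1
      rw [MulChar.eq_iff hg χ 1, orderOf_eq_one_iff.mp h, MulChar.one_apply_coe]
    · exact h
  -- the cardinality via nthRoots
  have hfc : (Finset.univ.filter (fun t : ZMod p => t ^ 3 = u)).card
      = Multiset.card (nthRoots 3 u) := by
    have hnodup := hξ.nthRoots_nodup hu
    rw [show Finset.univ.filter (fun t : ZMod p => t ^ 3 = u) = (nthRoots 3 u).toFinset by
      ext t
      simp [Multiset.mem_toFinset, mem_nthRoots (by norm_num : 0 < 3)]]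
    rw [Multiset.toFinset_card_eq_card_iff_nodup.mpr hnodup]
  rw [hfc, hξ.card_nthRoots, if_neg hu]
  have hui : IsUnit u := isUnit_iff_ne_zero.mpr hu
  by_cases hcube : ∃ α : ZMod p, α ^ 3 = u
  · rw [if_pos hcube]
    obtain ⟨α, hα⟩ := hcube
    have hα0 : α ≠ 0 := by
      rintro rfl
      exact hu (by rw [← hα]; simp)
    have hχu : χ u = 1 := by
      rw [← hα, map_pow, ← MulChar.pow_apply' χ (by norm_num : (3:ℕ) ≠ 0), hχ3,
        MulChar.one_apply (isUnit_iff_ne_zero.mpr hα0)]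
    rw [MulChar.one_apply hui, hχu, MulChar.pow_apply' χ (by norm_num : (2:ℕ) ≠ 0), hχu]
    norm_num
  · rw [if_neg hcube]
    -- u is not a cube, so χ u ≠ 1
    obtain ⟨k, hk⟩ : ∃ k : ℕ, g ^ k = hui.unit := by
      have := hg hui.unit
      rwa [← mem_powers_iff_mem_zpowers, Submonoid.mem_powers_iff] at this
    have hval : χ u = χ ↑g ^ k := by
      conv_lhs => rw [← hui.unit_spec, ← hk]
      rw [Units.val_pow_eq_pow_val, map_pow]
    have hne : χ u ≠ 1 := by
      intro h1
      rw [hval] at h1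
      have h3k : (3:ℕ) ∣ k := hordχg ▸ orderOf_dvd_of_pow_eq_one h1
      obtain ⟨m, rfl⟩ := h3k
      refine hcube ⟨((g ^ m : (ZMod p)ˣ) : ZMod p), ?_⟩
      rw [← Units.val_pow_eq_pow_val, ← pow_mul, mul_comm m 3, hk, hui.unit_spec]
    have hcube3 : (χ u) ^ 3 = 1 := by
      rw [← MulChar.pow_apply' χ (by norm_num : (3:ℕ) ≠ 0), hχ3, MulChar.one_apply hui]
    have hzero : 1 + χ u + (χ u) ^ 2 = 0 := by
      have hfac : (χ u - 1) * (1 + χ u + (χ u) ^ 2) = 0 := by linear_combination hcube3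
      rcases mul_eq_zero.mp hfac with h | h
      · exact absurd (by linear_combination h) hne
      · exact h
    rw [MulChar.one_apply hui, MulChar.pow_apply' χ (by norm_num : (2:ℕ) ≠ 0)]
    push_cast
    linear_combination -hzero


/-- The basic Gauss-sum evaluation `∑_t ψ(y t³) = χ²(y) g(χ) + χ(y) g(χ²)` for `y ≠ 0`. -/
private lemma S_eq {p : ℕ} [Fact p.Prime] (hmod : p % 3 = 1)
    (χ : MulChar (ZMod p) ℂ) (hχord : orderOf χ = 3)
    (ψ : AddChar (ZMod p) ℂ) (hψ : ψ.IsPrimitive) {y : ZMod p} (hy : y ≠ 0) :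
    ∑ t : ZMod p, ψ (y * t ^ 3)
      = (χ ^ 2) y * gaussSum χ ψ + χ y * gaussSum (χ ^ 2) ψ := by
  classical
  have hχ3 : χ ^ 3 = 1 := by rw [← hχord]; exact pow_orderOf_eq_one χ
  have hinvχ : χ⁻¹ = χ ^ 2 := inv_eq_of_mul_eq_one_right (by rw [← pow_succ']; exact hχ3)
  have hyu : IsUnit y := isUnit_iff_ne_zero.mpr hy
  have key : ∀ u : ZMod p,
      ((if u = 0 then (1:ℂ) else 0) + ((1 : MulChar (ZMod p) ℂ) u + χ u + (χ ^ 2) u)) * ψ (y * u)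
        = ψ (y * u) + (χ u * ψ (y * u) + (χ ^ 2) u * ψ (y * u)) := by
    intro u
    by_cases hu : u = 0
    · subst hu
      simp [MulChar.map_zero]
    · rw [if_neg hu, MulChar.one_apply (isUnit_iff_ne_zero.mpr hu)]
      ring
  have hstep : ∑ t : ZMod p, ψ (y * t ^ 3)
      = ∑ u : ZMod p, (ψ (y * u) + (χ u * ψ (y * u) + (χ ^ 2) u * ψ (y * u))) := by
    rw [← Finset.sum_fiberwise' Finset.univ (fun t : ZMod p => t ^ 3) (fun u => ψ (y * u))]
    refine Finset.sum_congr rfl fun u _ => ?_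
    rw [Finset.sum_const, nsmul_eq_mul, cube_count hmod χ hχord u, key u]
  rw [hstep, Finset.sum_add_distrib, Finset.sum_add_distrib]
  have termA : ∑ u : ZMod p, ψ (y * u) = 0 := by
    simp_rw [mul_comm y]
    rw [AddChar.sum_mulShift _ hψ, if_neg hy]
    exact Nat.cast_zero
  have termB : ∑ u : ZMod p, χ u * ψ (y * u) = (χ ^ 2) y * gaussSum χ ψ := by
    have hχy : χ y ≠ 0 := by
      intro h
      have := hyu.map χ
      rw [h] at this
      exact not_isUnit_zero this
    have h := gaussSum_mulShift χ ψ hyu.unit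
    rw [hyu.unit_spec] at h
    have hmul : gaussSum χ (AddChar.mulShift ψ y) = ∑ u : ZMod p, χ u * ψ (y * u) := by
      simp [gaussSum, AddChar.mulShift_apply]
    rw [← hmul, show (χ ^ 2) y = (χ y)⁻¹ by rw [← hinvχ, MulChar.inv_apply_eq_inv'], ← h,
      ← mul_assoc, inv_mul_cancel₀ hχy, one_mul]
  have termC : ∑ u : ZMod p, (χ ^ 2) u * ψ (y * u) = χ y * gaussSum (χ ^ 2) ψ := by
    have hχy : (χ ^ 2) y ≠ 0 := by
      intro h
      have := hyu.map (χ ^ 2)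
      rw [h] at this
      exact not_isUnit_zero this
    have h := gaussSum_mulShift (χ ^ 2) ψ hyu.unit
    rw [hyu.unit_spec] at h
    have hmul : gaussSum (χ ^ 2) (AddChar.mulShift ψ y) = ∑ u : ZMod p, (χ ^ 2) u * ψ (y * u) := by
      simp [gaussSum, AddChar.mulShift_apply]
    have hiv : ((χ ^ 2) y)⁻¹ = χ y := by
      rw [← MulChar.inv_apply_eq_inv', ← hinvχ, inv_inv]
    rw [← hmul, ← hiv, ← h, ← mul_assoc, inv_mul_cancel₀ hχy, one_mul]
  rw [termA, termB, termC, zero_add]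


/-- Main computation: existence of the canonical representation `4p = A² + 27B²` together
with the point count of the affine Fermat cubic in five variables. -/
private lemma exists_rep_and_count (p : ℕ) [Fact p.Prime] (hmod : p % 3 = 1) :
    ∃ A B : ℤ, 0 < B ∧ A % 3 = 1 ∧ (4 * p : ℤ) = A ^ 2 + 27 * B ^ 2 ∧
      ((Finset.univ.filter (fun x : Fin 5 → ZMod p => ∑ i, x i ^ 3 = 0)).card : ℂ)
        = (p : ℂ) ^ 4 + 5 * A * p * ((p : ℂ) - 1) := by
  classical
  have hp : p.Prime := Fact.out
  have hp2 : 2 ≤ p := hp.two_le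
  have hp3 : 3 ∣ p - 1 := by omega
  have hcard : Fintype.card (ZMod p) = p := ZMod.card p
  -- the primitive cube root of unity in ℂ
  set ω : ℂ := Complex.exp (2 * Real.pi * Complex.I / ((3:ℕ):ℂ)) with hωdef
  have hω : IsPrimitiveRoot ω 3 := Complex.isPrimitiveRoot_exp 3 (by norm_num)
  have hω3 : ω ^ 3 = 1 := hω.pow_eq_one
  have hgeom : 1 + ω + ω ^ 2 = 0 := by
    have := hω.geom_sum_eq_zero (by norm_num)
    simpa [Finset.sum_range_succ] using this
  have hsq : ω ^ 2 = -1 - ω := by linear_combination hgeom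
  have him : ω.im ≠ 0 := by
    intro h0
    have hsq' : ω * ω = -1 - ω := by rw [← sq]; exact hsq
    have h1 := congrArg Complex.re hsq'
    simp only [Complex.mul_re, Complex.sub_re, Complex.neg_re, Complex.one_re, h0, mul_zero,
      sub_zero] at h1
    nlinarith [sq_nonneg (2 * ω.re + 1)]
  -- the cubic character
  obtain ⟨χ, hχord⟩ := MulChar.exists_mulChar_orderOf (ZMod p) (by rw [hcard]; exact hp3) hω
  have hχ3 : χ ^ 3 = 1 := by rw [← hχord]; exact pow_orderOf_eq_one χ
  have hχ1 : χ ≠ 1 := by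
    intro h
    rw [h, orderOf_one] at hχord
    norm_num at hχord
  have hχ2 : χ ^ 2 ≠ 1 := by
    intro h
    have := orderOf_dvd_of_pow_eq_one h
    rw [hχord] at this
    norm_num at this
  have hinvχ : χ⁻¹ = χ ^ 2 := inv_eq_of_mul_eq_one_right (by rw [← pow_succ']; exact hχ3)
  have h4 : χ ^ 2 * χ ^ 2 = χ := by
    rw [← pow_add]
    rw [show (2 + 2 : ℕ) = 3 + 1 from rfl, pow_add, hχ3, one_mul, pow_one]
  -- the additive character
  set ζ : ℂ := Complex.exp (2 * Real.pi * Complex.I / ((p:ℕ):ℂ)) with hζdef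
  have hζ : IsPrimitiveRoot ζ p := Complex.isPrimitiveRoot_exp p (by omega)
  set ψ : AddChar (ZMod p) ℂ := AddChar.zmodChar p hζ.pow_eq_one with hψdef
  have hψ : ψ.IsPrimitive := AddChar.zmodChar_primitive_of_primitive_root p hζ
  -- the Gauss sums
  set G₁ : ℂ := gaussSum χ ψ with hG₁def
  set G₂ : ℂ := gaussSum (χ ^ 2) ψ with hG₂def
  set J₁ : ℂ := jacobiSum χ χ with hJ₁def
  set J₂ : ℂ := jacobiSum (χ ^ 2) (χ ^ 2) with hJ₂def
  set N : ℕ := (Finset.univ.filter (fun x : Fin 5 → ZMod p => ∑ i, x i ^ 3 = 0)).card with hNdef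
  -- Step 1: p * N via additive characters
  have step1 : ∑ y : ZMod p, (∑ t : ZMod p, ψ (y * t ^ 3)) ^ 5 = (N : ℂ) * p := by
    calc ∑ y : ZMod p, (∑ t : ZMod p, ψ (y * t ^ 3)) ^ 5
        = ∑ y : ZMod p, ∑ x : Fin 5 → ZMod p, ∏ i, ψ (y * x i ^ 3) := by
          refine Finset.sum_congr rfl fun y _ => ?_
          rw [Fintype.sum_pow]
      _ = ∑ x : Fin 5 → ZMod p, ∑ y : ZMod p, ψ (y * ∑ i, x i ^ 3) := by
          rw [Finset.sum_comm]
          refine Finset.sum_congr rfl fun x _ => Finset.sum_congr rfl fun y _ => ?_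
          rw [Finset.mul_sum, addChar_map_sum]
      _ = ∑ x : Fin 5 → ZMod p, (if (∑ i, x i ^ 3) = 0 then ((p : ℂ)) else 0) := by
          refine Finset.sum_congr rfl fun x _ => ?_
          rw [AddChar.sum_mulShift _ hψ]
          split_ifs <;> simp [hcard]
      _ = (N : ℂ) * p := by
          rw [← Finset.sum_filter, Finset.sum_const, nsmul_eq_mul]
  -- Step 2: splitting off y = 0
  have step2 : ∑ y : ZMod p, (∑ t : ZMod p, ψ (y * t ^ 3)) ^ 5
      = (p : ℂ) ^ 5 + ∑ y ∈ Finset.univ.erase (0 : ZMod p), ((χ ^ 2) y * G₁ + χ y * G₂) ^ 5 := by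
    rw [← Finset.add_sum_erase _ _ (Finset.mem_univ (0 : ZMod p))]
    congr 1
    · simp [hcard]
    · refine Finset.sum_congr rfl fun y hy => ?_
      rw [S_eq hmod χ hχord ψ hψ (Finset.mem_erase.mp hy).1]
  -- orthogonality
  have horth : ∀ m : ℕ, ∑ y ∈ Finset.univ.erase (0 : ZMod p), (χ ^ m) y
      = if χ ^ m = 1 then ((p : ℂ) - 1) else 0 := by
    intro m
    by_cases h : χ ^ m = 1
    · rw [if_pos h, h]
      calc ∑ y ∈ Finset.univ.erase (0 : ZMod p), (1 : MulChar (ZMod p) ℂ) y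
          = ∑ _y ∈ Finset.univ.erase (0 : ZMod p), (1 : ℂ) :=
            Finset.sum_congr rfl fun y hy =>
              MulChar.one_apply (isUnit_iff_ne_zero.mpr (Finset.mem_erase.mp hy).1)
        _ = ((p : ℂ) - 1) := by
            rw [Finset.sum_const, Finset.card_erase_of_mem (Finset.mem_univ _),
              Finset.card_univ, hcard, nsmul_eq_mul, mul_one, Nat.cast_sub hp.one_lt.le]
            norm_num
    · rw [if_neg h]
      have hsum := MulChar.sum_eq_zero_of_ne_one h
      rw [← Finset.add_sum_erase _ _ (Finset.mem_univ (0 : ZMod p)), MulChar.map_zero,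
        zero_add] at hsum
      exact hsum
  -- Step 3: binomial expansion
  have step3 : ∑ y ∈ Finset.univ.erase (0 : ZMod p), ((χ ^ 2) y * G₁ + χ y * G₂) ^ 5
      = ((p : ℂ) - 1) * (5 * (G₁ * G₂ ^ 4) + 5 * (G₁ ^ 4 * G₂)) := by
    have hexp : ∀ y ∈ Finset.univ.erase (0 : ZMod p), ((χ ^ 2) y * G₁ + χ y * G₂) ^ 5
        = ∑ k ∈ Finset.range 6, (χ ^ (k + 5)) y * (G₁ ^ k * G₂ ^ (5 - k) * (Nat.choose 5 k)) := by
      intro y hy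
      rw [add_pow]
      refine Finset.sum_congr rfl fun k hk => ?_
      have hk5 : k ≤ 5 := Nat.lt_succ_iff.mp (Finset.mem_range.mp hk)
      rw [mul_pow, mul_pow, MulChar.pow_apply' χ two_ne_zero,
        MulChar.pow_apply' χ (by positivity : k + 5 ≠ 0)]
      rw [← pow_mul]
      rw [show χ y ^ (k + 5) = χ y ^ (2 * k) * χ y ^ (5 - k) by
        rw [← pow_add]; congr 1; rw [two_mul, add_assoc, Nat.add_sub_cancel' hk5]]
      ring
    rw [Finset.sum_congr rfl hexp, Finset.sum_comm]
    have hval : ∀ k ∈ Finset.range 6,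
        ∑ y ∈ Finset.univ.erase (0 : ZMod p),
          (χ ^ (k + 5)) y * (G₁ ^ k * G₂ ^ (5 - k) * (Nat.choose 5 k))
        = (if (3:ℕ) ∣ (k + 5) then ((p : ℂ) - 1) else 0)
            * (G₁ ^ k * G₂ ^ (5 - k) * (Nat.choose 5 k)) := by
      intro k _
      rw [← Finset.sum_mul, horth (k + 5)]
      congr 1
      simp only [show (χ ^ (k+5) = 1) ↔ ((3:ℕ) ∣ (k+5)) by
        rw [← hχord]; exact orderOf_dvd_iff_pow_eq_one.symm]
    rw [Finset.sum_congr rfl hval]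
    simp only [Finset.sum_range_succ, Finset.sum_range_zero]
    norm_num
    ring
  -- Gauss sum identities
  have hm1 : χ (-1) = 1 := by
    have h2 : χ (-1) * χ (-1) = 1 := by
      rw [← map_mul, neg_mul_neg, one_mul, map_one]
    have h3 : χ (-1) ^ 3 = 1 := by
      rw [← MulChar.pow_apply' χ (by norm_num : (3:ℕ) ≠ 0), hχ3,
        MulChar.one_apply isUnit_one.neg]
    rw [pow_succ, sq, h2, one_mul] at h3
    exact h3
  have hG12 : G₁ * G₂ = (p : ℂ) := by
    have hm1' : χ⁻¹ (-1) = 1 := by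
      rw [MulChar.inv_apply_eq_inv', hm1, inv_one]
    have hG2inv : G₂ = gaussSum χ⁻¹ ψ⁻¹ := by
      rw [hG₂def, ← hinvχ, ← mul_gaussSum_inv_eq_gaussSum χ⁻¹ ψ, hm1', one_mul]
    rw [hG2inv, hG₁def, gaussSum_mul_gaussSum_eq_card hχ1 hψ, hcard]
  have hJe1 : G₂ * J₁ = G₁ * G₁ := by
    have h := jacobiSum_mul_nontrivial (by rwa [← sq] : χ * χ ≠ 1) ψ
    rw [← sq] at h
    exact h
  have hJe2 : G₁ * J₂ = G₂ * G₂ := by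
    have h := jacobiSum_mul_nontrivial (by rw [h4]; exact hχ1) ψ
    rw [h4] at h
    exact h
  have hG14 : G₁ ^ 4 * G₂ = (p : ℂ) ^ 2 * J₁ := by
    linear_combination (-(G₁^2*G₂)) * hJe1 + (J₁*(G₁*G₂ + (p:ℂ))) * hG12
  have hG24 : G₁ * G₂ ^ 4 = (p : ℂ) ^ 2 * J₂ := by
    linear_combination (-(G₂^2*G₁)) * hJe2 + (J₂*(G₁*G₂ + (p:ℂ))) * hG12
  -- the point count in terms of Jacobi sums
  have hp0 : (p : ℂ) ≠ 0 := Nat.cast_ne_zero.mpr hp.pos.ne'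
  have hNval : (N : ℂ) = (p:ℂ) ^ 4 + 5 * (p:ℂ) * ((p:ℂ) - 1) * (J₁ + J₂) := by
    have hmain : (N : ℂ) * p = ((p:ℂ) ^ 4 + 5 * (p:ℂ) * ((p:ℂ) - 1) * (J₁ + J₂)) * p := by
      rw [← step1, step2, step3]
      linear_combination (5*((p:ℂ)-1)) * hG24 + (5*((p:ℂ)-1)) * hG14
    exact mul_right_cancel₀ hp0 hmain
  -- arithmetic of the Jacobi sums
  have hJJ : J₁ * J₂ = (p : ℂ) := by
    have h := jacobiSum_mul_jacobiSum_inv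
      (by rw [ringChar.eq_zero, ZMod.ringChar_zmod_n]; exact Ne.symm hp.pos.ne')
      hχ1 hχ1 (by rwa [← sq] : χ * χ ≠ 1)
    rw [hinvχ, hcard] at h
    exact h
  have hJmem : J₁ ∈ Algebra.adjoin ℤ {ω} :=
    jacobiSum_mem_algebraAdjoin_of_pow_eq_one hχ3 hχ3 hω
  obtain ⟨u, v, huv⟩ := exists_coords hsq hJmem
  -- J₂ is the complex conjugate of J₁
  have hconjω : (starRingEnd ℂ) ω = ω ^ 2 := by
    have habs : ‖ω‖ = 1 := by
      have h3 : ‖ω‖ ^ 3 = 1 := by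
        rw [← norm_pow, hω3, norm_one]
      have h0 : 0 ≤ ‖ω‖ := norm_nonneg ω
      rcases lt_trichotomy (‖ω‖) 1 with h | h | h
      · have := pow_lt_one₀ h0 h (by norm_num : (3:ℕ) ≠ 0)
        rw [h3] at this
        norm_num at this
      · exact h
      · have := one_lt_pow₀ h (by norm_num : (3:ℕ) ≠ 0)
        rw [h3] at this
        norm_num at this
    have h1 : ω * (starRingEnd ℂ) ω = 1 := by
      rw [Complex.mul_conj, Complex.normSq_eq_norm_sq, habs]
      norm_num
    have h2 : ω * ω ^ 2 = 1 := by rw [← pow_succ']; exact hω3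
    have hω0 : ω ≠ 0 := fun h => by rw [h] at hω3; norm_num at hω3
    exact mul_left_cancel₀ hω0 (h1.trans h2.symm)
  have hJ2conj : J₂ = (u : ℂ) + (v : ℂ) * ω ^ 2 := by
    have hstarχ : χ.ringHomComp (starRingEnd ℂ) = χ ^ 2 := by
      rw [← hinvχ, ← MulChar.star_eq_inv]
      rfl
    have : J₂ = (starRingEnd ℂ) J₁ := by
      rw [hJ₂def, hJ₁def, ← hstarχ, jacobiSum_ringHomComp]
    rw [this, huv, map_add, map_mul, map_intCast, map_intCast, hconjω]
  -- the congruence J₁ ≡ -1 mod (ω-1)²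
  obtain ⟨z, hzmem, hzeq⟩ := exists_jacobiSum_eq_neg_one_add (by norm_num : 2 < 3)
    hχ3 hχ3 (by rw [hcard]; exact hp3) hω
  obtain ⟨sc, tc, hst⟩ := exists_coords hsq hzmem
  have hJcoord : (u : ℂ) + (v : ℂ) * ω = ((3*tc - 1 : ℤ) : ℂ) + ((3*tc - 3*sc : ℤ) : ℂ) * ω := by
    rw [← huv, hJ₁def, hzeq, hst]
    push_cast
    linear_combination ((tc:ℂ)*ω + (sc:ℂ) - 3*(tc:ℂ)) * hsq
  obtain ⟨hu, hv⟩ := coords_unique him hJcoord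
  -- the norm of J₁ is p
  have hnormC : ((u^2 - u*v + v^2 : ℤ) : ℂ) = ((p:ℤ) : ℂ) := by
    have hJJ' : ((u:ℂ) + (v:ℂ) * ω) * ((u:ℂ) + (v:ℂ) * ω ^ 2) = (p : ℂ) := by
      rw [← huv, ← hJ2conj]; exact hJJ
    push_cast
    linear_combination hJJ' + (-(u:ℂ)*(v:ℂ) - (v:ℂ)^2*ω + (v:ℂ)^2) * hsq
  have hnorm : u^2 - u*v + v^2 = (p : ℤ) := by exact_mod_cast hnormC
  -- assemble the representation 4p = A² + 27B²
  obtain ⟨w, hw⟩ : ∃ w : ℤ, v = 3 * w := ⟨tc - sc, by rw [hv]; ring⟩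
  have hrep' : (4 * p : ℤ) = (2*u - v)^2 + 27*w^2 := by
    rw [hw] at hnorm ⊢
    linear_combination (-4 : ℤ) * hnorm
  have hw0 : w ≠ 0 := by
    intro h0
    rw [h0, mul_zero] at hw
    rw [hw] at hnorm
    have hueq : u * u = (p:ℤ) := by linear_combination hnorm
    have hdvd : u.natAbs * u.natAbs = p := by
      have h' : u.natAbs * u.natAbs = (u * u).natAbs := (Int.natAbs_mul u u).symm
      rw [h', hueq, Int.natAbs_natCast]
    rcases hp.eq_one_or_self_of_dvd u.natAbs ⟨u.natAbs, hdvd.symm⟩ with h1 | h1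
    · rw [h1, one_mul] at hdvd
      exact hp.one_lt.ne' hdvd.symm
    · rw [h1] at hdvd
      have hlt : p < p * 2 := lt_mul_of_one_lt_right hp.pos (by norm_num : (1:ℕ) < 2)
      have hle : p * 2 ≤ p * p := Nat.mul_le_mul_left p hp.two_le
      rw [hdvd] at hle
      exact absurd (lt_of_lt_of_le hlt hle) (lt_irrefl p)
  have hmod3 : (2*u - v) % 3 = 1 := by
    have he : 2*u - v = 1 + 3*(tc + sc - 1) := by rw [hu, hv]; ring
    rw [he, Int.add_mul_emod_self_left]
    norm_num
  refine ⟨2*u - v, |w|, abs_pos.mpr hw0, hmod3, by rw [sq_abs]; exact hrep', ?_⟩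
  -- final count formula
  have hsumJ : J₁ + J₂ = ((2*u - v : ℤ) : ℂ) := by
    rw [huv, hJ2conj]
    push_cast
    linear_combination (v:ℂ) * hsq
  rw [hNval, hsumJ]
  push_cast
  ring

/-- For a prime `p ≡ 1 (mod 3)` and `(a, b)` the (unique) pair of integers with `b > 0`,
`a ≡ 1 (mod 3)` and `4p = a² + 27b²`, the Fermat cubic `x₁³+x₂³+x₃³+x₄³+x₅³ = 0` has
exactly `1 + (p − 1)·(1 + p + p² + p³ + 5ap)` solutions in `𝔽_p⁵`; equivalently, the
Fermat cubic threefold has `1 + p + p² + p³ + 5ap` points in `ℙ⁴(𝔽_p)`. -/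
theorem fermat_cubic_count_Fp_one_mod_three (p : ℕ) (hp : p.Prime) (hmod : p % 3 = 1)
    (a b : ℤ) (hb : 0 < b) (ha : a % 3 = 1) (hrep : (4 * p : ℤ) = a ^ 2 + 27 * b ^ 2) :
    (Nat.card {x : Fin 5 → ZMod p //
        (x 0) ^ 3 + (x 1) ^ 3 + (x 2) ^ 3 + (x 3) ^ 3 + (x 4) ^ 3 = 0} : ℤ)
      = 1 + ((p : ℤ) - 1) * (1 + p + p ^ 2 + p ^ 3 + 5 * a * p) := by
  classical
  haveI : Fact p.Prime := ⟨hp⟩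
  obtain ⟨A, B, hB, hA3, hArep, hAcount⟩ := exists_rep_and_count p hmod
  have hAa : a = A := rep_unique hp hb hB ha hA3 hrep hArep
  rw [← hAa] at hAcount
  have hNat : Nat.card {x : Fin 5 → ZMod p //
      (x 0) ^ 3 + (x 1) ^ 3 + (x 2) ^ 3 + (x 3) ^ 3 + (x 4) ^ 3 = 0}
      = (Finset.univ.filter (fun x : Fin 5 → ZMod p => ∑ i, x i ^ 3 = 0)).card := by
    rw [Nat.card_eq_fintype_card, Fintype.card_subtype]
    congr 1
    ext x
    simp [Fin.sum_univ_five]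
  have hZ : (((Finset.univ.filter (fun x : Fin 5 → ZMod p => ∑ i, x i ^ 3 = 0)).card : ℕ) : ℤ)
      = (p:ℤ)^4 + 5*a*p*((p:ℤ)-1) := by
    have h1 : ((((Finset.univ.filter
          (fun x : Fin 5 → ZMod p => ∑ i, x i ^ 3 = 0)).card : ℕ) : ℤ) : ℂ)
        = ((((p:ℤ)^4 + 5*a*p*((p:ℤ)-1)) : ℤ) : ℂ) := by
      push_cast
      rw [hAcount]
    exact_mod_cast h1
  rw [hNat, hZ]
  ring
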